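/- Let Z ≥ 1 with E[e^{-sZ}] = 1 - exp(-∫_{[0,∞)} e^{-s(1+x)}/(1+x) t(dx)) for a Radon measure t on [0,∞). Then for any a ∈ (1, 2] and any s ≥ 0: E[e^{-sZ}; Z < a] = ∫_{[0,a-1)} e^{-s(1+x)}/(1+x) t(dx). -/

import Mathlib

open MeasureTheory Real Set
open scoped ENNReal NNReal BoundedContinuousFunction

noncomputable def lap (A : Measure ℝ) (s : ℝ) : ℝ≥0∞ :=
  ∫⁻ x, ENNReal.ofReal (Real.exp (-s * x)) ∂A

lemma mexp (s : ℝ) : Measurable fun x : ℝ => ENNReal.ofReal (Real.exp (-s * x)) :=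
  (continuous_exp.comp (continuous_const.mul continuous_id)).measurable.ennreal_ofReal

section Unique
variable (A : Measure ℝ) (hA0 : A (Iio 0) = 0)

noncomputable def dampen (A : Measure ℝ) : Measure ℝ :=
  (A.withDensity fun x => ENNReal.ofReal (Real.exp (-x))).map fun x => Real.exp (-x)

lemma dampen_moment (n : ℕ) :
    ∫⁻ y, (ENNReal.ofReal y) ^ n ∂(dampen A) = lap A ((n : ℝ) + 1) := by
  rw [dampen, lintegral_map (by fun_prop) (by fun_prop),
    lintegral_withDensity_eq_lintegral_mul _ (by simpa using mexp 1) (by fun_prop)]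
  refine lintegral_congr fun x => ?_
  simp only [Pi.mul_apply]
  rw [← ENNReal.ofReal_pow (exp_nonneg _), ← ENNReal.ofReal_mul (exp_nonneg _),
    ← Real.exp_nat_mul, ← Real.exp_add]
  ring_nf

lemma dampen_compl (hA0 : A (Iio 0) = 0) : (dampen A) ((Icc (0:ℝ) 1)ᶜ) = 0 := by
  rw [dampen, Measure.map_apply (by fun_prop) (measurableSet_Icc.compl)]
  have hpre : (fun x : ℝ => Real.exp (-x)) ⁻¹' (Icc (0:ℝ) 1)ᶜ = Iio 0 := by
    ext x
    simp only [mem_preimage, mem_compl_iff, mem_Icc, mem_Iio, not_and_or, not_le]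
    constructor
    · rintro (h | h)
      · exact absurd (exp_nonneg _) (not_le.mpr h)
      · have := Real.exp_lt_exp.mp (by simpa using h : Real.exp 0 < Real.exp (-x))
        linarith
    · intro hx
      right
      have : Real.exp 0 < Real.exp (-x) := Real.exp_lt_exp.mpr (by linarith)
      simpa using this
  rw [hpre, withDensity_apply _ measurableSet_Iio, Measure.restrict_eq_zero.mpr hA0,
    lintegral_zero_measure]

lemma dampen_ae (hA0 : A (Iio 0) = 0) : ∀ᵐ y ∂(dampen A), y ∈ Icc (0:ℝ) 1 := by
  rw [ae_iff]
  have : {y : ℝ | ¬ y ∈ Icc (0:ℝ) 1} = (Icc (0:ℝ) 1)ᶜ := rfl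
  rw [this]
  exact dampen_compl A hA0

lemma dampen_univ : (dampen A) univ = lap A 1 := by
  have := dampen_moment A 0
  simpa using this

lemma dampen_isFinite (hfin : lap A 1 ≠ ⊤) : IsFiniteMeasure (dampen A) :=
  ⟨by rw [dampen_univ]; exact hfin.lt_top⟩

lemma dampen_moment_real (hA0 : A (Iio 0) = 0) (n : ℕ) :
    ∫ y, y ^ n ∂(dampen A) = (lap A ((n : ℝ) + 1)).toReal := by
  have hnn : 0 ≤ᵐ[dampen A] fun y => y ^ n :=
    (dampen_ae A hA0).mono fun y hy => pow_nonneg hy.1 n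
  rw [integral_eq_lintegral_of_nonneg_ae hnn (by fun_prop), ← dampen_moment A n]
  congr 1
  refine lintegral_congr_ae ((dampen_ae A hA0).mono fun y hy => ?_)
  exact ENNReal.ofReal_pow hy.1 n

lemma integrable_pow_of_ae {α : Measure ℝ} [IsFiniteMeasure α]
    (hae : ∀ᵐ y ∂α, y ∈ Icc (0:ℝ) 1) (n : ℕ) : Integrable (fun y => y ^ n) α := by
  refine (integrable_const (1:ℝ)).mono' (by fun_prop) ?_
  refine hae.mono fun y hy => ?_
  rw [norm_pow, norm_eq_abs, abs_of_nonneg hy.1]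
  exact pow_le_one₀ hy.1 hy.2

theorem measures_eq_of_moments (α β : Measure ℝ) [IsFiniteMeasure α] [IsFiniteMeasure β]
    (hαe : ∀ᵐ y ∂α, y ∈ Icc (0:ℝ) 1) (hβe : ∀ᵐ y ∂β, y ∈ Icc (0:ℝ) 1)
    (hmom : ∀ n : ℕ, ∫ y, y ^ n ∂α = ∫ y, y ^ n ∂β) : α = β := by
  -- polynomial integrals agree
  have hpoly : ∀ q : Polynomial ℝ, ∫ y, q.eval y ∂α = ∫ y, q.eval y ∂β := by
    intro q
    have hev : ∀ y : ℝ, q.eval y =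
        ∑ i ∈ Finset.range (q.natDegree + 1), q.coeff i * y ^ i := fun y =>
      q.eval_eq_sum_range y
    simp_rw [hev]
    rw [integral_finset_sum _ fun i _ => (integrable_pow_of_ae hαe i).const_mul _,
      integral_finset_sum _ fun i _ => (integrable_pow_of_ae hβe i).const_mul _]
    refine Finset.sum_congr rfl fun i _ => ?_
    rw [integral_const_mul, integral_const_mul, hmom i]
  -- bounded continuous real functions agree
  have hbcf : ∀ g : ℝ →ᵇ ℝ, ∫ y, g y ∂α = ∫ y, g y ∂β := by
    intro g
    have hcl := polynomialFunctions_closure_eq_top 0 1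
    set G : C(Icc (0:ℝ) 1, ℝ) := (g : C(ℝ, ℝ)).restrict (Icc (0:ℝ) 1) with hG
    have hmemG : G ∈ (polynomialFunctions (Icc (0:ℝ) 1)).topologicalClosure := by
      rw [hcl]; trivial
    have hmemG' : G ∈ closure (polynomialFunctions (Icc (0:ℝ) 1) : Set C(Icc (0:ℝ) 1, ℝ)) :=
      hmemG
    set C : ℝ := (α univ).toReal + (β univ).toReal + 1 with hC
    have hCpos : 0 < C := by positivity
    have key : ∀ ε : ℝ, 0 < ε → |∫ y, g y ∂α - ∫ y, g y ∂β| ≤ C * ε := by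
      intro ε hε
      obtain ⟨p, hp, hdist⟩ := Metric.mem_closure_iff.mp hmemG' ε hε
      rw [polynomialFunctions_coe] at hp
      obtain ⟨q, hq⟩ := hp
      have hbound : ∀ y ∈ Icc (0:ℝ) 1, |g y - q.eval y| ≤ ε := by
        intro y hy
        have := ContinuousMap.dist_le_iff_of_nonempty.mp hdist.le ⟨y, hy⟩
        rw [← hq] at this
        simpa [G, Real.dist_eq] using this
      have hint : ∀ (m : Measure ℝ) [IsFiniteMeasure m], (∀ᵐ y ∂m, y ∈ Icc (0:ℝ) 1) →
          |∫ y, g y ∂m - ∫ y, q.eval y ∂m| ≤ ε * (m univ).toReal := by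
        intro m _ hme
        have hgi : Integrable (fun y => g y) m := g.integrable m
        have hqi : Integrable (fun y => q.eval y) m := by
          have : Continuous fun y : ℝ => q.eval y := q.continuous_aeval
          refine (integrable_const (∑ i ∈ Finset.range (q.natDegree + 1), |q.coeff i|)).mono'
            this.aestronglyMeasurable ?_
          refine hme.mono fun y hy => ?_
          rw [norm_eq_abs, q.eval_eq_sum_range]
          refine (Finset.abs_sum_le_sum_abs _ _).trans ?_
          refine Finset.sum_le_sum fun i _ => ?_
          rw [abs_mul]
          calc |q.coeff i| * |y ^ i| ≤ |q.coeff i| * 1 := by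
                refine mul_le_mul_of_nonneg_left ?_ (abs_nonneg _)
                rw [abs_pow, abs_of_nonneg hy.1]
                exact pow_le_one₀ hy.1 hy.2
            _ = |q.coeff i| := mul_one _
        rw [← integral_sub hgi hqi]
        have := norm_integral_le_of_norm_le_const (μ := m) (C := ε)
          (f := fun y => g y - q.eval y) (hme.mono fun y hy => by
            rw [norm_eq_abs]; exact hbound y hy)
        simpa [measureReal_def] using this
      calc |∫ y, g y ∂α - ∫ y, g y ∂β|
          ≤ |∫ y, g y ∂α - ∫ y, q.eval y ∂α| + |∫ y, q.eval y ∂β - ∫ y, g y ∂β| := by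
            rw [hpoly q]; exact abs_sub_le _ _ _
        _ ≤ ε * (α univ).toReal + ε * (β univ).toReal := by
            refine add_le_add (hint α hαe) ?_
            rw [abs_sub_comm]; exact hint β hβe
        _ ≤ C * ε := by rw [hC]; ring_nf; nlinarith [hε.le]
    by_contra hne
    have hpos : 0 < |∫ y, g y ∂α - ∫ y, g y ∂β| := abs_pos.mpr (sub_ne_zero.mpr hne)
    have := key (|∫ y, g y ∂α - ∫ y, g y ∂β| / (2 * C)) (by positivity)
    rw [mul_div_assoc'] at this
    set D := |∫ y, g y ∂α - ∫ y, g y ∂β| with hD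
    have hCD : C * D / (2 * C) = D / 2 := by
      field_simp
    rw [hCD] at this
    linarith
  -- conclude via bounded continuous ℝ≥0 functions
  refine ext_of_forall_lintegral_eq_of_IsFiniteMeasure fun f => ?_
  obtain ⟨Cb, hCb⟩ := f.bounded
  set g : ℝ →ᵇ ℝ := BoundedContinuousFunction.mkOfBound
    ⟨fun y => (f y : ℝ), NNReal.continuous_coe.comp f.continuous⟩ Cb
    (fun x y => by
      simp only [ContinuousMap.coe_mk, Real.dist_eq, ← NNReal.dist_eq]
      exact hCb x y) with hg
  have hintg : ∀ (m : Measure ℝ) [IsFiniteMeasure m], Integrable (fun y => ((f y : ℝ))) m :=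
    fun m _ => g.integrable m
  rw [lintegral_coe_eq_integral f (hintg α), lintegral_coe_eq_integral f (hintg β)]
  congr 1
  exact hbcf g

lemma exp_neg_embedding : MeasurableEmbedding (fun x : ℝ => Real.exp (-x)) := by
  refine (continuous_exp.comp continuous_neg).measurableEmbedding fun a b hab => ?_
  have := Real.exp_injective hab
  simpa using this

theorem laplace_unique (A B : Measure ℝ) (hA0 : A (Iio 0) = 0) (hB0 : B (Iio 0) = 0)
    (hfinA : ∀ s : ℝ, 0 < s → lap A s ≠ ⊤)
    (heq : ∀ s : ℝ, 0 < s → lap A s = lap B s) : A = B := by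
  have hfinB : ∀ s : ℝ, 0 < s → lap B s ≠ ⊤ := fun s hs => (heq s hs) ▸ hfinA s hs
  haveI := dampen_isFinite A (hfinA 1 one_pos)
  haveI := dampen_isFinite B (hfinB 1 one_pos)
  have hmom : ∀ n : ℕ, ∫ y, y ^ n ∂(dampen A) = ∫ y, y ^ n ∂(dampen B) := by
    intro n
    rw [dampen_moment_real A hA0 n, dampen_moment_real B hB0 n,
      heq ((n : ℝ) + 1) (by positivity)]
  have hdampen : dampen A = dampen B :=
    measures_eq_of_moments _ _ (dampen_ae A hA0) (dampen_ae B hB0) hmom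
  -- recover the exponentially-weighted measures
  have hAB1 : (A.withDensity fun x => ENNReal.ofReal (Real.exp (-x)))
      = (B.withDensity fun x => ENNReal.ofReal (Real.exp (-x))) := by
    ext s hs
    have him : MeasurableSet ((fun x : ℝ => Real.exp (-x)) '' s) :=
      exp_neg_embedding.measurableSet_image' hs
    have hα := congrArg (fun m : Measure ℝ => m ((fun x : ℝ => Real.exp (-x)) '' s)) hdampen
    simp only [dampen] at hα
    rwa [Measure.map_apply exp_neg_embedding.measurable him,
      Measure.map_apply exp_neg_embedding.measurable him,
      exp_neg_embedding.injective.preimage_image] at hα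
  -- invert the density
  have hrec : ∀ C : Measure ℝ,
      ((C.withDensity fun x => ENNReal.ofReal (Real.exp (-x))).withDensity
        fun x => ENNReal.ofReal (Real.exp x)) = C := by
    intro C
    rw [← withDensity_mul C (by fun_prop) (by fun_prop)]
    have : ((fun x : ℝ => ENNReal.ofReal (Real.exp (-x))) *
        fun x => ENNReal.ofReal (Real.exp x)) = fun _ => (1 : ℝ≥0∞) := by
      funext x
      simp only [Pi.mul_apply]
      rw [← ENNReal.ofReal_mul (exp_nonneg _), ← Real.exp_add]
      simp
    rw [this]
    calc C.withDensity (fun _ => (1:ℝ≥0∞)) = C.withDensity 1 := rfl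
      _ = C := withDensity_one
  calc A = _ := (hrec A).symm
    _ = _ := by rw [hAB1]
    _ = B := hrec B

end Unique

section Conv

noncomputable def convPow (ν : Measure ℝ) : ℕ → Measure ℝ
  | 0 => Measure.dirac 0
  | n+1 => ((convPow ν n).prod ν).map fun p => p.1 + p.2

lemma convPow_prob (ν : Measure ℝ) [IsProbabilityMeasure ν] (n : ℕ) :
    IsProbabilityMeasure (convPow ν n) := by
  induction n with
  | zero => rw [convPow]; infer_instance
  | succ n ih =>
    rw [convPow]
    exact Measure.isProbabilityMeasure_map (measurable_fst.add measurable_snd).aemeasurable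

lemma lap_convPow (ν : Measure ℝ) [IsProbabilityMeasure ν] (s : ℝ) (n : ℕ) :
    lap (convPow ν n) s = (lap ν s) ^ n := by
  induction n with
  | zero => simp [convPow, lap, lintegral_dirac]
  | succ n ih =>
    haveI := convPow_prob ν n
    rw [convPow, lap, lintegral_map (mexp s) (by fun_prop : Measurable fun p : ℝ × ℝ => p.1 + p.2)]
    have hpt : ∀ p : ℝ × ℝ, ENNReal.ofReal (Real.exp (-s * (p.1 + p.2)))
        = ENNReal.ofReal (Real.exp (-s * p.1)) * ENNReal.ofReal (Real.exp (-s * p.2)) := by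
      intro p
      rw [← ENNReal.ofReal_mul (exp_nonneg _), ← Real.exp_add]
      ring_nf
    simp_rw [hpt]
    rw [lintegral_prod_mul (mexp s).aemeasurable (mexp s).aemeasurable, pow_succ, ← ih]
    rfl

lemma convPow_null (ν : Measure ℝ) [IsProbabilityMeasure ν] (hν : ν (Iio 1) = 0) (n : ℕ) :
    convPow ν n (Iio (n : ℝ)) = 0 := by
  induction n with
  | zero => rw [convPow]; simp
  | succ n ih =>
    haveI := convPow_prob ν n
    rw [convPow, Measure.map_apply (by fun_prop : Measurable fun p : ℝ × ℝ => p.1 + p.2) measurableSet_Iio]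
    have hsub : (fun p : ℝ × ℝ => p.1 + p.2) ⁻¹' Iio ((n + 1 : ℕ) : ℝ)
        ⊆ (Iio (n:ℝ) ×ˢ univ) ∪ (univ ×ˢ Iio 1) := by
      rintro ⟨x, y⟩ h
      simp only [mem_preimage, mem_Iio, Nat.cast_succ] at h
      rcases lt_or_ge x (n:ℝ) with hx | hx
      · exact Or.inl ⟨hx, mem_univ _⟩
      · exact Or.inr ⟨mem_univ _, show y ∈ Iio (1:ℝ) from by simp only [mem_Iio]; linarith⟩
    refine le_antisymm ?_ (zero_le)
    refine le_trans (measure_mono hsub) (le_trans (measure_union_le _ _) ?_)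
    rw [Measure.prod_prod, Measure.prod_prod, ih, hν]
    simp

end Conv

lemma lap_m_restrict (t : Measure ℝ) (s c : ℝ) :
    ∫⁻ x in Iio c, ENNReal.ofReal (Real.exp (-s * x))
      ∂(((t.restrict (Ici 0)).withDensity fun x => ENNReal.ofReal (1 + x)⁻¹).map
        fun x : ℝ => 1 + x)
    = ∫⁻ x in Ico 0 (c - 1), ENNReal.ofReal (Real.exp (-s * (1 + x)) / (1 + x)) ∂t := by
  rw [setLIntegral_map measurableSet_Iio (mexp s) (by fun_prop : Measurable fun x : ℝ => 1 + x)]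
  have hpre : (fun x : ℝ => 1 + x) ⁻¹' Iio c = Iio (c - 1) := by
    ext x
    simp only [mem_preimage, mem_Iio]
    constructor <;> intro <;> linarith
  have hset : Iio (c - 1) ∩ Ici (0:ℝ) = Ico 0 (c - 1) := by
    ext x
    simp only [mem_inter_iff, mem_Iio, mem_Ici, mem_Ico]
    tauto
  rw [hpre, restrict_withDensity measurableSet_Iio,
    lintegral_withDensity_eq_lintegral_mul _ (by fun_prop)
      (by fun_prop : Measurable fun x : ℝ => ENNReal.ofReal (Real.exp (-s * (1 + x)))),
    Measure.restrict_restrict measurableSet_Iio, hset]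
  refine lintegral_congr fun x => ?_
  simp only [Pi.mul_apply, Function.comp]
  rw [div_eq_mul_inv, ENNReal.ofReal_mul (exp_nonneg _), mul_comm]

lemma lap_m_eq (t : Measure ℝ) (s : ℝ) :
    lap (((t.restrict (Ici 0)).withDensity fun x => ENNReal.ofReal (1 + x)⁻¹).map
      fun x : ℝ => 1 + x) s
    = ∫⁻ x in Ici 0, ENNReal.ofReal (Real.exp (-s * (1 + x)) / (1 + x)) ∂t := by
  rw [lap, lintegral_map (mexp s) (by fun_prop : Measurable fun x : ℝ => 1 + x),
    lintegral_withDensity_eq_lintegral_mul _ (by fun_prop)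
      (by fun_prop : Measurable fun x : ℝ => ENNReal.ofReal (Real.exp (-s * (1 + x))))]
  refine lintegral_congr fun x => ?_
  simp only [Pi.mul_apply, Function.comp]
  rw [div_eq_mul_inv, ENNReal.ofReal_mul (exp_nonneg _), mul_comm]

lemma m_null (t : Measure ℝ) :
    (((t.restrict (Ici 0)).withDensity fun x => ENNReal.ofReal (1 + x)⁻¹).map
      fun x : ℝ => 1 + x) (Iio 1) = 0 := by
  rw [Measure.map_apply (by fun_prop : Measurable fun x : ℝ => 1 + x) measurableSet_Iio]
  have hpre : (fun x : ℝ => 1 + x) ⁻¹' Iio 1 = Iio 0 := by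
    ext x
    simp only [mem_preimage, mem_Iio]
    constructor <;> intro <;> linarith
  rw [hpre, withDensity_apply _ measurableSet_Iio,
    Measure.restrict_restrict measurableSet_Iio]
  have : Iio (0:ℝ) ∩ Ici 0 = ∅ := by
    ext x
    simp only [mem_inter_iff, mem_Iio, mem_Ici, mem_empty_iff_false, iff_false, not_and, not_le]
    intro h
    linarith
  rw [this, Measure.restrict_empty, lintegral_zero_measure]

/-- `E[e^{-sZ}; Z < a] = ∫_{[0,a-1)} e^{-s(1+x)}/(1+x) t(dx)` for `a ∈ (1,2]`, in the setting
where the Laplace transform of `Z ≥ 1` has the integral representation via the measure `t`. -/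
theorem stmt9 {Ω : Type*} [MeasurableSpace Ω] (μ : Measure Ω) [IsProbabilityMeasure μ]
    (Z : Ω → ℝ) (hZm : Measurable Z) (hZ1 : ∀ᵐ ω ∂μ, 1 ≤ Z ω)
    (t : Measure ℝ) [IsLocallyFiniteMeasure t] (ht : t (Set.Iio 0) = 0)
    (hfin : ∀ s : ℝ, 0 < s →
      (∫⁻ x in Set.Ici (0 : ℝ), ENNReal.ofReal (Real.exp (-s * (1 + x)) / (1 + x)) ∂t) ≠ ⊤)
    (hlap : ∀ s : ℝ, 0 < s →
      ∫ ω, Real.exp (-s * Z ω) ∂μ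
        = 1 - Real.exp
            (-(∫⁻ x in Set.Ici (0 : ℝ),
                ENNReal.ofReal (Real.exp (-s * (1 + x)) / (1 + x)) ∂t).toReal))
    (a : ℝ) (ha : a ∈ Set.Ioc (1 : ℝ) 2) (s : ℝ) (hs : 0 ≤ s) :
    ∫ ω in {ω | Z ω < a}, Real.exp (-s * Z ω) ∂μ
      = (∫⁻ x in Set.Ico (0 : ℝ) (a - 1),
          ENNReal.ofReal (Real.exp (-s * (1 + x)) / (1 + x)) ∂t).toReal := by
  obtain ⟨ha1, ha2⟩ := ha
  set ν := μ.map Z with hνdef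
  haveI : IsProbabilityMeasure ν := Measure.isProbabilityMeasure_map hZm.aemeasurable
  have hν1 : ν (Iio 1) = 0 := by
    rw [hνdef, Measure.map_apply hZm measurableSet_Iio]
    have hset : Z ⁻¹' Iio 1 = {ω | ¬ 1 ≤ Z ω} := by
      ext ω
      simp [not_le]
    rw [hset]
    exact hZ1
  set m := ((t.restrict (Ici 0)).withDensity fun x => ENNReal.ofReal (1 + x)⁻¹).map
      (fun x : ℝ => 1 + x) with hmdef
  -- the candidate measure B
  set B := ν + Measure.sum (fun k : ℕ => (((k : ℝ≥0∞) + 2))⁻¹ • convPow ν (k + 2)) with hBdef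
  -- B agrees with ν below 2
  have hBsmall : ∀ S : Set ℝ, MeasurableSet S → S ⊆ Iio (2:ℝ) → B S = ν S := by
    intro S hS hS2
    rw [hBdef, Measure.add_apply, Measure.sum_apply _ hS]
    have hzero : ∀ k : ℕ, ((((k : ℝ≥0∞) + 2))⁻¹ • convPow ν (k + 2)) S = 0 := by
      intro k
      have hsub : S ⊆ Iio (((k + 2 : ℕ) : ℝ)) := by
        refine hS2.trans fun x hx => ?_
        simp only [mem_Iio] at hx ⊢
        have : (2:ℝ) ≤ ((k + 2 : ℕ) : ℝ) := by
          push_cast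
          linarith [Nat.cast_nonneg (α := ℝ) k]
        linarith
      have : convPow ν (k + 2) S = 0 :=
        le_antisymm (le_trans (measure_mono hsub) (convPow_null ν hν1 (k + 2)).le) (zero_le)
      rw [Measure.smul_apply, this, smul_zero]
    simp only [hzero, tsum_zero, add_zero]
  -- Laplace transform of ν
  have hFint : ∀ s' : ℝ, 0 ≤ s' → Integrable (fun x => Real.exp (-s' * x)) ν := by
    intro s' hs'
    refine (integrable_const (1:ℝ)).mono' (Continuous.aestronglyMeasurable (by fun_prop)) ?_
    have hae : ∀ᵐ x ∂ν, 1 ≤ x := by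
      rw [ae_iff]
      have : {x : ℝ | ¬ 1 ≤ x} = Iio 1 := by
        ext x
        simp [not_le]
      rw [this]
      exact hν1
    refine hae.mono fun x hx => ?_
    rw [norm_eq_abs, abs_of_nonneg (exp_nonneg _)]
    calc Real.exp (-s' * x) ≤ Real.exp 0 := exp_le_exp.mpr (by nlinarith)
      _ = 1 := exp_zero
  have hlapν : ∀ s' : ℝ, 0 ≤ s' →
      lap ν s' = ENNReal.ofReal (∫ x, Real.exp (-s' * x) ∂ν) :=
    fun s' hs' => (ofReal_integral_eq_lintegral_ofReal (hFint s' hs')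
      (Filter.Eventually.of_forall fun x => exp_nonneg _)).symm
  have hμν : ∀ s' : ℝ, ∫ x, Real.exp (-s' * x) ∂ν = ∫ ω, Real.exp (-s' * Z ω) ∂μ := by
    intro s'
    rw [hνdef, integral_map hZm.aemeasurable (Continuous.aestronglyMeasurable (by fun_prop))]
  -- Laplace transform of B
  have hlapB : ∀ s' : ℝ, lap B s'
      = lap ν s' + ∑' k : ℕ, (((k : ℝ≥0∞) + 2))⁻¹ * (lap ν s') ^ (k + 2) := by
    intro s'
    rw [hBdef]
    show (∫⁻ x, ENNReal.ofReal (Real.exp (-s' * x)) ∂(ν + _)) = _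
    rw [lintegral_add_measure, lintegral_sum_measure]
    congr 1
    refine tsum_congr fun k => ?_
    rw [lintegral_smul_measure]
    congr 1
    exact lap_convPow ν s' (k + 2)
  -- the key Laplace identity
  have key : ∀ s' : ℝ, 0 < s' → lap m s' = lap B s' := by
    intro s' hs'
    set F := ∫ x, Real.exp (-s' * x) ∂ν with hF
    have hF0 : 0 ≤ F := integral_nonneg fun x => exp_nonneg _
    set L := (∫⁻ x in Set.Ici (0 : ℝ),
        ENNReal.ofReal (Real.exp (-s' * (1 + x)) / (1 + x)) ∂t).toReal with hL
    have hFlap : F = 1 - Real.exp (-L) := by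
      rw [hF, hμν s']
      exact hlap s' hs'
    have hFlt : F < 1 := by
      rw [hFlap]
      have := exp_pos (-L)
      linarith
    have hlog : L = -Real.log (1 - F) := by
      have h1F : 1 - F = Real.exp (-L) := by linarith
      rw [h1F, Real.log_exp]
      ring
    have habs : |F| < 1 := abs_lt.mpr ⟨by linarith, hFlt⟩
    have hsum := hasSum_pow_div_log_of_abs_lt_one habs
    rw [← hlog] at hsum
    set g : ℕ → ℝ := fun k => F ^ (k + 2) / ((k : ℝ) + 2) with hg
    have hgf : g = fun k => F ^ ((k + 1) + 1) / (((k + 1 : ℕ) : ℝ) + 1) := by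
      funext k
      rw [hg]
      push_cast
      ring_nf
    have hgsum : Summable g := by
      rw [hgf]
      exact (summable_nat_add_iff 1).mpr hsum.summable
    have htsum : L = F + ∑' k, g k := by
      rw [← hsum.tsum_eq, Summable.tsum_eq_zero_add hsum.summable]
      congr 1
      · norm_num
      · rw [hgf]
    rw [hmdef, lap_m_eq t s', hlapB s', hlapν s' hs'.le, ← hF]
    have hHL : (∫⁻ x in Set.Ici (0:ℝ),
        ENNReal.ofReal (Real.exp (-s' * (1 + x)) / (1 + x)) ∂t) = ENNReal.ofReal L := by
      rw [hL]
      exact (ENNReal.ofReal_toReal (hfin s' hs')).symm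
    rw [hHL, htsum,
      ENNReal.ofReal_add hF0 (tsum_nonneg fun k => div_nonneg (pow_nonneg hF0 _) (by positivity)),
      ENNReal.ofReal_tsum_of_nonneg (fun k => div_nonneg (pow_nonneg hF0 _) (by positivity)) hgsum]
    congr 1
    refine tsum_congr fun k => ?_
    rw [div_eq_mul_inv, ENNReal.ofReal_mul (pow_nonneg hF0 _), ENNReal.ofReal_pow hF0, mul_comm]
    congr 1
    rw [ENNReal.ofReal_inv_of_pos (by positivity)]
    congr 1
    rw [ENNReal.ofReal_add (Nat.cast_nonneg k) (by norm_num), ENNReal.ofReal_natCast]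
    norm_num
  -- apply uniqueness
  have hm1 : m (Iio 1) = 0 := m_null t
  have hmB : m = B := by
    refine laplace_unique m B ?_ ?_ ?_ key
    · exact le_antisymm (le_trans (measure_mono (Iio_subset_Iio (by norm_num))) hm1.le)
        (zero_le)
    · have hB0 : B (Iio 0) = ν (Iio 0) :=
        hBsmall _ measurableSet_Iio (Iio_subset_Iio (by norm_num))
      rw [hB0]
      exact le_antisymm (le_trans (measure_mono (Iio_subset_Iio (by norm_num))) hν1.le)
        (zero_le)
    · intro s' hs'
      rw [hmdef, lap_m_eq t s']
      exact hfin s' hs'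
  -- restricted equality
  have hrestrict : ∫⁻ x in Iio a, ENNReal.ofReal (Real.exp (-s * x)) ∂ν
      = ∫⁻ x in Iio a, ENNReal.ofReal (Real.exp (-s * x)) ∂m := by
    have hres : B.restrict (Iio a) = ν.restrict (Iio a) := by
      ext S hS
      rw [Measure.restrict_apply hS, Measure.restrict_apply hS]
      exact hBsmall _ (hS.inter measurableSet_Iio) fun x hx => lt_of_lt_of_le hx.2 ha2
    rw [hmB]
    show ∫⁻ x, ENNReal.ofReal (Real.exp (-s * x)) ∂(ν.restrict (Iio a))
      = ∫⁻ x, ENNReal.ofReal (Real.exp (-s * x)) ∂(B.restrict (Iio a))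
    rw [hres]
  -- final computation
  have hmap := setIntegral_map (μ := μ) (g := Z) (f := fun x => Real.exp (-s * x)) (s := Iio a)
    measurableSet_Iio (Continuous.aestronglyMeasurable (by fun_prop)) hZm.aemeasurable
  have hsi : {ω | Z ω < a} = Z ⁻¹' (Iio a) := rfl
  rw [hsi, ← hmap, ← hνdef,
    integral_eq_lintegral_of_nonneg_ae (Filter.Eventually.of_forall fun x => exp_nonneg _)
      (Continuous.aestronglyMeasurable (by fun_prop)),
    hrestrict, hmdef, lap_m_restrict t s a]
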